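/- Let k > 0 and let a, b be nonzero real numbers. Then the infimum of (√S + √R)/√(R·S·(2k − R·a² − S·b²)) over all R > 0, S > 0 with R·a² + S·b² < 2k equals k^{−1}·(|a|^{2/3} + |b|^{2/3})^{3/2}, and this infimum is attained at R = k/(|a|^{4/3}·(|a|^{2/3} + |b|^{2/3})) and S = k/(|b|^{4/3}·(|a|^{2/3} + |b|^{2/3})). -/

import Mathlib

private theorem key_poly (k α β u v : ℝ) (hα : 0 < α) (hβ : 0 < β) (hu : 0 < u) (hv : 0 < v) :
    (α+β)^3 * (u^2*v^2*(2*k - α^3*u^2 - β^3*v^2)) ≤ k^2*(u+v)^2 := by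
  have hG : 0 ≤ (α^3*u^2+β^3*v^2)*(u+v)^2 - (α+β)^3*u^2*v^2 := by
    nlinarith [mul_nonneg (mul_nonneg hv.le (sq_nonneg (α*u-β*v))) (by positivity : (0:ℝ) ≤ 2*α*u+β*v),
      mul_nonneg (mul_nonneg hu.le (sq_nonneg (α*u-β*v))) (by positivity : (0:ℝ) ≤ α*u+2*β*v)]
  nlinarith [sq_nonneg (k*(u+v)^2 - (α+β)^3*u^2*v^2),
    mul_nonneg (by positivity : (0:ℝ) ≤ (α+β)^3*u^2*v^2) hG,
    sq_nonneg (u+v), mul_pos hu hv]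

private theorem gain_aux1 (k a b : ℝ) (hk : 0 < k)
    (α β : ℝ) (hα : 0 < α) (hβ : 0 < β)
    (hα3 : α ^ 3 = a ^ 2) (hβ3 : β ^ 3 = b ^ 2)
    (s : ℝ) (hs2 : s ^ 2 = α + β) :
    ∀ R S : ℝ, 0 < R → 0 < S → R * a ^ 2 + S * b ^ 2 < 2 * k →
      k⁻¹ * s ^ 3 ≤
        (Real.sqrt S + Real.sqrt R) / Real.sqrt (R * S * (2 * k - R * a ^ 2 - S * b ^ 2)) := by
  intro R S hR hS hlt
  have hD : 0 < 2 * k - R * a ^ 2 - S * b ^ 2 := by linarith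
  obtain ⟨u, hudef⟩ : ∃ x, x = Real.sqrt R := ⟨_, rfl⟩
  obtain ⟨v, hvdef⟩ : ∃ x, x = Real.sqrt S := ⟨_, rfl⟩
  obtain ⟨w, hwdef⟩ : ∃ x, x = Real.sqrt (2 * k - R * a ^ 2 - S * b ^ 2) := ⟨_, rfl⟩
  have hu : 0 < u := hudef ▸ Real.sqrt_pos.2 hR
  have hv : 0 < v := hvdef ▸ Real.sqrt_pos.2 hS
  have hw : 0 < w := hwdef ▸ Real.sqrt_pos.2 hD
  have hu2 : u ^ 2 = R := hudef ▸ Real.sq_sqrt hR.le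
  have hv2 : v ^ 2 = S := hvdef ▸ Real.sq_sqrt hS.le
  have hw2 : w ^ 2 = 2 * k - R * a ^ 2 - S * b ^ 2 := hwdef ▸ Real.sq_sqrt hD.le
  have hsqrtM : Real.sqrt (R * S * (2 * k - R * a ^ 2 - S * b ^ 2)) = u * v * w := by
    rw [Real.sqrt_mul (by positivity), Real.sqrt_mul hR.le, hudef, hvdef, hwdef]
  rw [hsqrtM, ← hudef, ← hvdef, le_div_iff₀ (by positivity)]
  have hkey := key_poly k α β u v hα hβ hu hv
  rw [hα3, hβ3, hu2, hv2] at hkey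
  have h2 : (s ^ 3 * (u * v * w)) ^ 2 ≤ (k * (v + u)) ^ 2 := by
    have e : (s ^ 3 * (u * v * w)) ^ 2 = (s ^ 2) ^ 3 * (u ^ 2 * v ^ 2 * w ^ 2) := by ring
    rw [e, hs2, hu2, hv2, hw2]
    nlinarith [hkey]
  have h3 : s ^ 3 * (u * v * w) ≤ k * (v + u) :=
    le_of_pow_le_pow_left₀ two_ne_zero (by positivity) h2
  calc k⁻¹ * s ^ 3 * (u * v * w) = k⁻¹ * (s ^ 3 * (u * v * w)) := by ring
    _ ≤ k⁻¹ * (k * (v + u)) := mul_le_mul_of_nonneg_left h3 (by positivity)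
    _ = v + u := by field_simp

private theorem gain_aux2 (k a b : ℝ) (hk : 0 < k)
    (α β : ℝ) (hα : 0 < α) (hβ : 0 < β)
    (hα3 : α ^ 3 = a ^ 2) (hβ3 : β ^ 3 = b ^ 2) :
    let R := k / (α ^ 2 * (α + β));
    let S := k / (β ^ 2 * (α + β));
    0 < R ∧ 0 < S ∧ R * a ^ 2 + S * b ^ 2 < 2 * k ∧
      (Real.sqrt S + Real.sqrt R) / Real.sqrt (R * S * (2 * k - R * a ^ 2 - S * b ^ 2)) =
        k⁻¹ * Real.sqrt (α + β) ^ 3 := by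
  intro R S
  have hT : 0 < α + β := by linarith
  set s : ℝ := Real.sqrt (α + β) with hsdef
  have hs : 0 < s := Real.sqrt_pos.2 hT
  have hs2 : s ^ 2 = α + β := Real.sq_sqrt hT.le
  clear_value s
  set K : ℝ := Real.sqrt k with hKdef
  have hK : 0 < K := Real.sqrt_pos.2 hk
  have hK2 : K ^ 2 = k := Real.sq_sqrt hk.le
  clear_value K
  have hR : 0 < R := by simp only [R]; positivity
  have hS : 0 < S := by simp only [S]; positivity
  have hsum : R * a ^ 2 + S * b ^ 2 = k := by
    simp only [R, S]; rw [← hα3, ← hβ3]; field_simp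
  refine ⟨hR, hS, by linarith, ?_⟩
  have hD : 2 * k - R * a ^ 2 - S * b ^ 2 = k := by linarith
  have hsqR : Real.sqrt R = K / (α * s) := by
    rw [show R = (K / (α * s)) ^ 2 by
      simp only [R]; rw [div_pow, hK2, mul_pow, hs2]]
    exact Real.sqrt_sq (by positivity)
  have hsqS : Real.sqrt S = K / (β * s) := by
    rw [show S = (K / (β * s)) ^ 2 by
      simp only [S]; rw [div_pow, hK2, mul_pow, hs2]]
    exact Real.sqrt_sq (by positivity)
  have hsqM : Real.sqrt (R * S * (2 * k - R * a ^ 2 - S * b ^ 2))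
      = k * K / (α * β * s ^ 2) := by
    rw [hD, show R * S * k = (k * K / (α * β * s ^ 2)) ^ 2 by
      simp only [R, S]; rw [hs2]; field_simp; linear_combination (-1 : ℝ) * hK2]
    exact Real.sqrt_sq (by positivity)
  rw [hsqR, hsqS, hsqM]
  rw [div_eq_iff (by positivity), eq_comm]
  field_simp
  linear_combination hs2

/-- The minimization of `γ + δ = (√S + √R)/√(RS(2k − Ra² − Sb²))` over admissible
`R, S > 0`: the minimum equals `k⁻¹(|a|^{2/3} + |b|^{2/3})^{3/2}` and is attained
at `R = k/(|a|^{4/3}(|a|^{2/3} + |b|^{2/3}))`, `S = k/(|b|^{4/3}(|a|^{2/3} + |b|^{2/3}))`. -/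
theorem gain_sum_minimization (k a b : ℝ) (hk : 0 < k) (ha : a ≠ 0) (hb : b ≠ 0) :
    (∀ R S : ℝ, 0 < R → 0 < S → R * a ^ 2 + S * b ^ 2 < 2 * k →
      k⁻¹ * (|a| ^ ((2:ℝ)/3) + |b| ^ ((2:ℝ)/3)) ^ ((3:ℝ)/2) ≤
        (Real.sqrt S + Real.sqrt R) / Real.sqrt (R * S * (2 * k - R * a ^ 2 - S * b ^ 2))) ∧
    (let R := k / (|a| ^ ((4:ℝ)/3) * (|a| ^ ((2:ℝ)/3) + |b| ^ ((2:ℝ)/3)));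
     let S := k / (|b| ^ ((4:ℝ)/3) * (|a| ^ ((2:ℝ)/3) + |b| ^ ((2:ℝ)/3)));
     0 < R ∧ 0 < S ∧ R * a ^ 2 + S * b ^ 2 < 2 * k ∧
       (Real.sqrt S + Real.sqrt R) / Real.sqrt (R * S * (2 * k - R * a ^ 2 - S * b ^ 2)) =
         k⁻¹ * (|a| ^ ((2:ℝ)/3) + |b| ^ ((2:ℝ)/3)) ^ ((3:ℝ)/2)) := by
  have ha' : 0 < |a| := abs_pos.2 ha
  have hb' : 0 < |b| := abs_pos.2 hb
  set α : ℝ := |a| ^ ((2:ℝ)/3) with hαdef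
  set β : ℝ := |b| ^ ((2:ℝ)/3) with hβdef
  have hα : 0 < α := Real.rpow_pos_of_pos ha' _
  have hβ : 0 < β := Real.rpow_pos_of_pos hb' _
  have hα3 : α ^ 3 = a ^ 2 := by
    rw [hαdef, ← Real.rpow_natCast (|a| ^ ((2:ℝ)/3)) 3, ← Real.rpow_mul (abs_nonneg a)]
    norm_num
  have hβ3 : β ^ 3 = b ^ 2 := by
    rw [hβdef, ← Real.rpow_natCast (|b| ^ ((2:ℝ)/3)) 3, ← Real.rpow_mul (abs_nonneg b)]
    norm_num
  have hα4 : |a| ^ ((4:ℝ)/3) = α ^ 2 := by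
    rw [hαdef, ← Real.rpow_natCast (|a| ^ ((2:ℝ)/3)) 2, ← Real.rpow_mul (abs_nonneg a)]
    norm_num
  have hβ4 : |b| ^ ((4:ℝ)/3) = β ^ 2 := by
    rw [hβdef, ← Real.rpow_natCast (|b| ^ ((2:ℝ)/3)) 2, ← Real.rpow_mul (abs_nonneg b)]
    norm_num
  have hT : 0 < α + β := by linarith
  have hs2 : Real.sqrt (α + β) ^ 2 = α + β := Real.sq_sqrt hT.le
  have hc : (α + β) ^ ((3:ℝ)/2) = Real.sqrt (α + β) ^ 3 := by
    rw [Real.sqrt_eq_rpow, ← Real.rpow_natCast ((α+β) ^ ((1:ℝ)/2)) 3, ← Real.rpow_mul hT.le]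
    norm_num
  clear_value α β
  constructor
  · rw [hc]
    exact gain_aux1 k a b hk α β hα hβ hα3 hβ3 (Real.sqrt (α + β)) hs2
  · rw [hα4, hβ4, hc]
    exact gain_aux2 k a b hk α β hα hβ hα3 hβ3
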